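/- arXiv:1504.00795 — 5 statements merged into one kernel-verified Lean document; each statement's English description precedes it below -/
import Mathlib

section
/- For all real x, y, u, v, setting V = y² + v², Z = x² + u², ω = V + Z, and Δ = xv - yu, the polynomial P₀ = (5VZ + ω²)(2VZ + ω²) - 12Δ²(ω² - VZ) satisfies P₀ ≥ (63/88)·(x² + y² + u² + v²)⁴. -/
theorem stmt_3 (x y u v V Z ω Δ P₀ : ℝ)
    (hV : V = y ^ 2 + v ^ 2) (hZ : Z = x ^ 2 + u ^ 2)
    (hω : ω = V + Z) (hΔ : Δ = x * v - y * u)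
    (hP : P₀ = (5 * V * Z + ω ^ 2) * (2 * V * Z + ω ^ 2) - 12 * Δ ^ 2 * (ω ^ 2 - V * Z)) :
    P₀ ≥ 63 / 88 * (x ^ 2 + y ^ 2 + u ^ 2 + v ^ 2) ^ 4 := by
  have hCS : Δ ^ 2 ≤ V * Z := by
    subst hΔ hV hZ; nlinarith [sq_nonneg (x*y + u*v)]
  have h4 : 4 * (V * Z) ≤ ω ^ 2 := by subst hω; nlinarith [sq_nonneg (V - Z)]
  have hVZ : 0 ≤ V * Z := le_trans (sq_nonneg Δ) hCS
  have hωp : V * Z ≤ ω ^ 2 := by nlinarith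
  have hsum : x ^ 2 + y ^ 2 + u ^ 2 + v ^ 2 = ω := by subst hV hZ hω; ring
  rw [hsum, hP]
  nlinarith [sq_nonneg (44 * (V * Z) - 5 * ω ^ 2), mul_le_mul_of_nonneg_right hCS (sub_nonneg.2 hωp), sq_nonneg ω]
end

section
/- Let ρ₀(x, y, u, v) = (x² + u²)²(y² + v²) + (x² + u²)(y² + v²)². Then the gradient ∇ρ₀ vanishes exactly on the set {y = v = 0} ∪ {x = u = 0}. -/
theorem stmt_10 (ρ₀ : ℝ × ℝ × ℝ × ℝ → ℝ)
    (hρ₀ : ρ₀ = fun p =>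
      (p.1 ^ 2 + p.2.2.1 ^ 2) ^ 2 * (p.2.1 ^ 2 + p.2.2.2 ^ 2) +
      (p.1 ^ 2 + p.2.2.1 ^ 2) * (p.2.1 ^ 2 + p.2.2.2 ^ 2) ^ 2) :
    ∀ x y u v : ℝ, fderiv ℝ ρ₀ (x, y, u, v) = 0 ↔ (y = 0 ∧ v = 0) ∨ (x = 0 ∧ u = 0) := by
  subst hρ₀
  have heq : (fun p : ℝ × ℝ × ℝ × ℝ =>
      (p.1 ^ 2 + p.2.2.1 ^ 2) ^ 2 * (p.2.1 ^ 2 + p.2.2.2 ^ 2) +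
      (p.1 ^ 2 + p.2.2.1 ^ 2) * (p.2.1 ^ 2 + p.2.2.2 ^ 2) ^ 2) =
      (fun q : ℝ × ℝ × ℝ × ℝ =>
        (q.1 * q.1 + q.2.2.1 * q.2.2.1) * (q.1 * q.1 + q.2.2.1 * q.2.2.1) *
          (q.2.1 * q.2.1 + q.2.2.2 * q.2.2.2) +
        (q.1 * q.1 + q.2.2.1 * q.2.2.1) *
          ((q.2.1 * q.2.1 + q.2.2.2 * q.2.2.2) * (q.2.1 * q.2.1 + q.2.2.2 * q.2.2.2))) := by
    funext q; ring
  rw [heq]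
  intro x y u v
  set p : ℝ × ℝ × ℝ × ℝ := (x, y, u, v) with hp
  have hx : HasFDerivAt (fun q : ℝ × ℝ × ℝ × ℝ => q.1)
      (ContinuousLinearMap.fst ℝ ℝ (ℝ × ℝ × ℝ)) p := hasFDerivAt_fst
  have hy : HasFDerivAt (fun q : ℝ × ℝ × ℝ × ℝ => q.2.1)
      ((ContinuousLinearMap.fst ℝ ℝ (ℝ × ℝ)).comp (ContinuousLinearMap.snd ℝ ℝ (ℝ × ℝ × ℝ))) p :=
    hasFDerivAt_fst.comp p hasFDerivAt_snd
  have hu : HasFDerivAt (fun q : ℝ × ℝ × ℝ × ℝ => q.2.2.1)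
      ((ContinuousLinearMap.fst ℝ ℝ ℝ).comp ((ContinuousLinearMap.snd ℝ ℝ (ℝ × ℝ)).comp
        (ContinuousLinearMap.snd ℝ ℝ (ℝ × ℝ × ℝ)))) p :=
    hasFDerivAt_fst.comp p (hasFDerivAt_snd.comp p hasFDerivAt_snd)
  have hv : HasFDerivAt (fun q : ℝ × ℝ × ℝ × ℝ => q.2.2.2)
      ((ContinuousLinearMap.snd ℝ ℝ ℝ).comp ((ContinuousLinearMap.snd ℝ ℝ (ℝ × ℝ)).comp
        (ContinuousLinearMap.snd ℝ ℝ (ℝ × ℝ × ℝ)))) p :=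
    hasFDerivAt_snd.comp p (hasFDerivAt_snd.comp p hasFDerivAt_snd)
  have hA := (hx.mul hx).add (hu.mul hu)
  have hB := (hy.mul hy).add (hv.mul hv)
  have key := ((hA.mul hA).mul hB).add (hA.mul (hB.mul hB))
  have hval : ∀ a b c d : ℝ,
      (fderiv ℝ (fun q : ℝ × ℝ × ℝ × ℝ =>
        (q.1 * q.1 + q.2.2.1 * q.2.2.1) * (q.1 * q.1 + q.2.2.1 * q.2.2.1) *
          (q.2.1 * q.2.1 + q.2.2.2 * q.2.2.2) +
        (q.1 * q.1 + q.2.2.1 * q.2.2.1) *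
          ((q.2.1 * q.2.1 + q.2.2.2 * q.2.2.2) * (q.2.1 * q.2.1 + q.2.2.2 * q.2.2.2))) p)
        (a, b, c, d) =
      2 * (x * a + u * c) * ((y * y + v * v) * (2 * (x * x + u * u) + (y * y + v * v)))
        + 2 * (y * b + v * d) * ((x * x + u * u) * ((x * x + u * u) + 2 * (y * y + v * v))) := by
    intro a b c d
    have h := congrArg (fun L => L (a, b, c, d)) key.fderiv
    simp only [ContinuousLinearMap.add_apply, ContinuousLinearMap.smul_apply,
      ContinuousLinearMap.comp_apply, ContinuousLinearMap.coe_fst', ContinuousLinearMap.coe_snd',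
      smul_eq_mul, hp, Pi.mul_def, Pi.add_def] at h ⊢
    rw [h]; ring
  constructor
  · intro h
    by_cases hA0 : x * x + u * u = 0
    · exact Or.inr ⟨by nlinarith, by nlinarith⟩
    · left
      have hApos : 0 < x * x + u * u := lt_of_le_of_ne (by nlinarith [mul_self_nonneg x, mul_self_nonneg u]) (Ne.symm hA0)
      have hK : 0 < (x * x + u * u) * ((x * x + u * u) + 2 * (y * y + v * v)) := by nlinarith [mul_self_nonneg y, mul_self_nonneg v, mul_pos hApos hApos]
      have h1 := hval 0 1 0 0
      have h2 := hval 0 0 0 1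
      rw [h, ContinuousLinearMap.zero_apply] at h1 h2
      constructor
      · have : y * ((x * x + u * u) * ((x * x + u * u) + 2 * (y * y + v * v))) = 0 := by
          linear_combination -h1 / 2
        rcases mul_eq_zero.mp this with h0 | h0
        · exact h0
        · exact absurd h0 (ne_of_gt hK)
      · have : v * ((x * x + u * u) * ((x * x + u * u) + 2 * (y * y + v * v))) = 0 := by
          linear_combination -h2 / 2
        rcases mul_eq_zero.mp this with h0 | h0
        · exact h0
        · exact absurd h0 (ne_of_gt hK)
  · intro h
    refine ContinuousLinearMap.ext fun q => ?_
    obtain ⟨a, b, c, d⟩ := q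
    rw [hval a b c d, ContinuousLinearMap.zero_apply]
    rcases h with ⟨h1, h2⟩ | ⟨h1, h2⟩ <;> subst h1 <;> subst h2 <;> ring
end

section
/- Let M and N be real-linear subspaces of ℂⁿ of real dimension n with M ∩ N = {0}, both totally real (containing no nonzero complex subspace). Then there exists an invertible ℂ-linear map T : ℂⁿ → ℂⁿ with T(N) = ℝⁿ and T(M) = (A + iI)ℝⁿ for some real n×n matrix A such that i is not an eigenvalue of A (equivalently, A + iI is invertible over ℂ). -/
open Matrix

/-- Multiplication by `i` on `ℂⁿ`, as a real-linear map. -/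
noncomputable def Jmap (n : ℕ) : (Fin n → ℂ) →ₗ[ℝ] (Fin n → ℂ) :=
  LinearMap.restrictScalars ℝ (Complex.I • (LinearMap.id : (Fin n → ℂ) →ₗ[ℂ] (Fin n → ℂ)))

/-- The inclusion `ℝⁿ → ℂⁿ` as a real-linear map. -/
noncomputable def iota (n : ℕ) : (Fin n → ℝ) →ₗ[ℝ] (Fin n → ℂ) where
  toFun x := fun i => (x i : ℂ)
  map_add' x y := by ext i; simp
  map_smul' c x := by ext i; simp

/-- The standard real subspace `ℝⁿ ⊂ ℂⁿ`. -/
noncomputable def stdReal (n : ℕ) : Submodule ℝ (Fin n → ℂ) := LinearMap.range (iota n)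

/-- The real subspace `(A + iI)ℝⁿ ⊂ ℂⁿ` associated to a real matrix `A`. -/
noncomputable def MA {n : ℕ} (A : Matrix (Fin n) (Fin n) ℝ) : Submodule ℝ (Fin n → ℂ) :=
  LinearMap.range ((LinearMap.restrictScalars ℝ
    (Matrix.mulVecLin (A.map (Complex.ofReal) + Complex.I • (1 : Matrix (Fin n) (Fin n) ℂ)))).comp
      (iota n))

/-! ### Auxiliary definitions and lemmas -/

noncomputable def ReL (n : ℕ) : (Fin n → ℂ) →ₗ[ℝ] (Fin n → ℝ) where
  toFun z := fun i => (z i).re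
  map_add' x y := by ext i; simp
  map_smul' c x := by ext i; simp

noncomputable def ImL (n : ℕ) : (Fin n → ℂ) →ₗ[ℝ] (Fin n → ℝ) where
  toFun z := fun i => (z i).im
  map_add' x y := by ext i; simp
  map_smul' c x := by ext i; simp

lemma decomp {n : ℕ} (z : Fin n → ℂ) :
    z = iota n (ReL n z) + Complex.I • iota n (ImL n z) := by
  funext i
  simp [iota, ReL, ImL, Complex.ext_iff, Complex.mul_re, Complex.mul_im]

lemma ReL_iota {n : ℕ} (x : Fin n → ℝ) : ReL n (iota n x) = x := by
  funext i; simp [ReL, iota]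

lemma ImL_iota {n : ℕ} (x : Fin n → ℝ) : ImL n (iota n x) = 0 := by
  funext i; simp [ImL, iota]

lemma ReL_I_iota {n : ℕ} (x : Fin n → ℝ) : ReL n (Complex.I • iota n x) = 0 := by
  funext i; simp [ReL, iota]

lemma ImL_I_iota {n : ℕ} (x : Fin n → ℝ) : ImL n (Complex.I • iota n x) = x := by
  funext i; simp [ImL, iota]

lemma mulVec_iota {n : ℕ} (A : Matrix (Fin n) (Fin n) ℝ) (y : Fin n → ℝ) :
    (A.map (Complex.ofReal)) *ᵥ (iota n y) = iota n (A *ᵥ y) := by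
  funext i; simp [Matrix.mulVec, dotProduct, iota]

lemma S_apply {n : ℕ} (A : Matrix (Fin n) (Fin n) ℝ) (y : Fin n → ℝ) :
    (A.map (Complex.ofReal) + Complex.I • (1 : Matrix (Fin n) (Fin n) ℂ)).mulVecLin (iota n y)
      = iota n (A *ᵥ y) + Complex.I • iota n y := by
  rw [Matrix.mulVecLin_apply, Matrix.add_mulVec, Matrix.smul_mulVec, Matrix.one_mulVec,
    mulVec_iota]

lemma stdReal_span (n : ℕ) :
    stdReal n = Submodule.span ℝ (Set.range fun j => (Pi.single j 1 : Fin n → ℂ)) := by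
  apply le_antisymm
  · rintro _ ⟨x, rfl⟩
    have : iota n x = ∑ j, x j • (Pi.single j 1 : Fin n → ℂ) := by
      funext i
      simp only [iota, LinearMap.coe_mk, AddHom.coe_mk, Finset.sum_apply, Pi.smul_apply,
        Pi.single_apply, smul_ite, smul_zero, Complex.real_smul, mul_one,
        Finset.sum_ite_eq, Finset.mem_univ, if_pos]
    rw [this]
    exact Submodule.sum_mem _ fun j _ => Submodule.smul_mem _ _ (Submodule.subset_span ⟨j, rfl⟩)
  · rw [Submodule.span_le]
    rintro _ ⟨j, rfl⟩
    exact ⟨Pi.single j 1, by funext i; simp [iota, Pi.single_apply]; split <;> simp⟩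

lemma li_complex {n : ℕ} (N : Submodule ℝ (Fin n → ℂ))
    (hNtr : N ⊓ N.map (Jmap n) = ⊥) (b : Module.Basis (Fin n) ℝ N) :
    LinearIndependent ℂ (fun j => (b j : Fin n → ℂ)) := by
  rw [Fintype.linearIndependent_iff]
  intro g hg j
  set a : N := ∑ i, (g i).re • b i with ha
  set c : N := ∑ i, (g i).im • b i with hc
  have hval : (a : Fin n → ℂ) + Complex.I • (c : Fin n → ℂ) = 0 := by
    rw [← hg]
    push_cast [ha, hc, Finset.smul_sum]
    rw [← Finset.sum_add_distrib]
    refine Finset.sum_congr rfl fun i _ => ?_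
    rw [← algebraMap_smul ℂ ((g i).re) ((b i : Fin n → ℂ)),
      ← algebraMap_smul ℂ ((g i).im) ((b i : Fin n → ℂ)), smul_smul, ← add_smul]
    congr 1
    simp [Complex.ext_iff]
  have hamem : (a : Fin n → ℂ) ∈ N ⊓ N.map (Jmap n) := by
    constructor
    · exact a.2
    · refine ⟨-(c : Fin n → ℂ), neg_mem c.2, ?_⟩
      simp only [Jmap, LinearMap.restrictScalars_apply, LinearMap.smul_apply, LinearMap.id_coe,
        id_eq]
      rw [smul_neg, eq_comm]
      exact eq_neg_of_add_eq_zero_left hval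
  rw [hNtr, Submodule.mem_bot] at hamem
  have ha0 : a = 0 := Subtype.ext hamem
  have hc0 : c = 0 := by
    have h1 : Complex.I • (c : Fin n → ℂ) = 0 := by rw [← hval, hamem]; simp
    have : (c : Fin n → ℂ) = 0 := by
      have := congrArg (fun z => Complex.I⁻¹ • z) h1
      simpa [smul_smul, Complex.I_ne_zero] using this
    exact Subtype.ext this
  have hre := Fintype.linearIndependent_iff.mp b.linearIndependent (fun i => (g i).re)
    (by rw [← ha, ha0]) j
  have him := Fintype.linearIndependent_iff.mp b.linearIndependent (fun i => (g i).im)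
    (by rw [← hc, hc0]) j
  exact Complex.ext hre him

theorem stmt_11 (n : ℕ) (M N : Submodule ℝ (Fin n → ℂ))
    (hMdim : Module.finrank ℝ M = n) (hNdim : Module.finrank ℝ N = n)
    (hMN : M ⊓ N = ⊥)
    (hMtr : M ⊓ M.map (Jmap n) = ⊥) (hNtr : N ⊓ N.map (Jmap n) = ⊥) :
    ∃ (T : (Fin n → ℂ) ≃ₗ[ℂ] (Fin n → ℂ)) (A : Matrix (Fin n) (Fin n) ℝ),
      IsUnit (A.map (Complex.ofReal) + Complex.I • (1 : Matrix (Fin n) (Fin n) ℂ)) ∧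
      N.map (LinearMap.restrictScalars ℝ T.toLinearMap) = stdReal n ∧
      M.map (LinearMap.restrictScalars ℝ T.toLinearMap) = MA A := by
  rcases Nat.eq_zero_or_pos n with h0 | hn
  · subst h0
    refine ⟨LinearEquiv.refl ℂ _, 0, ?_, Subsingleton.elim _ _, Subsingleton.elim _ _⟩
    simp [Matrix.isUnit_iff_isUnit_det, Matrix.det_fin_zero]
    ext i; exact i.elim0
  have hNe : Nonempty (Fin n) := ⟨⟨0, hn⟩⟩
  -- a real basis of N, which is then a complex basis of ℂⁿ
  let b : Module.Basis (Fin n) ℝ N := Module.finBasisOfFinrankEq ℝ N hNdim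
  have hLI : LinearIndependent ℂ (fun j => (b j : Fin n → ℂ)) := li_complex N hNtr b
  have hcard : Fintype.card (Fin n) = Module.finrank ℂ (Fin n → ℂ) := by simp
  let bC : Module.Basis (Fin n) ℂ (Fin n → ℂ) := basisOfLinearIndependentOfCardEqFinrank hLI hcard
  let T : (Fin n → ℂ) ≃ₗ[ℂ] (Fin n → ℂ) := bC.equiv (Pi.basisFun ℂ (Fin n)) (Equiv.refl _)
  set Tr : (Fin n → ℂ) →ₗ[ℝ] (Fin n → ℂ) := LinearMap.restrictScalars ℝ T.toLinearMap with hTr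
  have hTrinj : Function.Injective Tr := T.injective
  have hTb : ∀ j, Tr (b j : Fin n → ℂ) = Pi.single j 1 := by
    intro j
    have hbc : (bC j : Fin n → ℂ) = (b j : Fin n → ℂ) := by
      simp [bC, coe_basisOfLinearIndependentOfCardEqFinrank]
    show T (b j : Fin n → ℂ) = _
    rw [← hbc, Module.Basis.equiv_apply, Equiv.refl_apply, Pi.basisFun_apply]
  -- T maps N onto ℝⁿ
  have hNspan : N = Submodule.span ℝ (Set.range fun j => (b j : Fin n → ℂ)) := by
    have h := congrArg (Submodule.map N.subtype) b.span_eq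
    rw [Submodule.map_span, Submodule.map_top, Submodule.range_subtype, ← Set.range_comp] at h
    exact h.symm
  have hTN : N.map Tr = stdReal n := by
    rw [hNspan, Submodule.map_span, stdReal_span]
    congr 1
    rw [← Set.range_comp]
    exact congrArg Set.range (funext hTb)
  -- properties of M' = T(M)
  set M' : Submodule ℝ (Fin n → ℂ) := M.map Tr with hM'
  have hM'std : M' ⊓ stdReal n = ⊥ := by
    rw [← hTN, ← Submodule.map_inf Tr hTrinj, hMN, Submodule.map_bot]
  have hJTr : (Jmap n).comp Tr = Tr.comp (Jmap n) := by
    refine LinearMap.ext fun x => ?_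
    simp only [Jmap, LinearMap.coe_comp, Function.comp_apply, LinearMap.restrictScalars_apply,
      LinearMap.smul_apply, LinearMap.id_coe, id_eq, LinearEquiv.coe_coe, hTr]
    exact (LinearMap.map_smul (T : (Fin n → ℂ) →ₗ[ℂ] (Fin n → ℂ)) Complex.I x).symm
  have hM'tr : M' ⊓ M'.map (Jmap n) = ⊥ := by
    rw [hM', ← Submodule.map_comp, hJTr, Submodule.map_comp,
      ← Submodule.map_inf Tr hTrinj, hMtr, Submodule.map_bot]
  have hM'dim : Module.finrank ℝ M' = n := by
    rw [hM']
    rw [show M.map Tr = M.map (T.restrictScalars ℝ : (Fin n → ℂ) →ₗ[ℝ] (Fin n → ℂ)) from rfl,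
      LinearEquiv.finrank_map_eq]
    exact hMdim
  -- the projection M' → ℝⁿ along ℝⁿ is bijective
  set φ : M' →ₗ[ℝ] (Fin n → ℝ) := (ImL n).comp M'.subtype with hφ
  have hφinj : Function.Injective φ := by
    rw [← LinearMap.ker_eq_bot, LinearMap.ker_eq_bot']
    intro m hm
    have hm' : ImL n (m : Fin n → ℂ) = 0 := hm
    have hmem : (m : Fin n → ℂ) ∈ M' ⊓ stdReal n := by
      refine ⟨m.2, ⟨ReL n (m : Fin n → ℂ), ?_⟩⟩
      conv_rhs => rw [decomp (m : Fin n → ℂ)]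
      rw [hm']
      simp
    rw [hM'std, Submodule.mem_bot] at hmem
    exact Subtype.ext hmem
  have hφsurj : Function.Surjective φ := by
    have : Module.finrank ℝ M' = Module.finrank ℝ (Fin n → ℝ) := by simp [hM'dim]
    exact (LinearMap.injective_iff_surjective_of_finrank_eq_finrank this).mp hφinj
  let φe : M' ≃ₗ[ℝ] (Fin n → ℝ) := LinearEquiv.ofBijective φ ⟨hφinj, hφsurj⟩
  set A : Matrix (Fin n) (Fin n) ℝ :=
    LinearMap.toMatrix' ((ReL n).comp (M'.subtype.comp φe.symm.toLinearMap)) with hA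
  have key : ∀ y : Fin n → ℝ,
      ((φe.symm y : M') : Fin n → ℂ) = iota n (A *ᵥ y) + Complex.I • iota n y := by
    intro y
    have h1 : ImL n ((φe.symm y : M') : Fin n → ℂ) = y := φe.apply_symm_apply y
    have h2 : ReL n ((φe.symm y : M') : Fin n → ℂ) = A *ᵥ y := by
      rw [hA, ← Matrix.toLin'_apply, Matrix.toLin'_toMatrix']
      rfl
    conv_lhs => rw [decomp ((φe.symm y : M') : Fin n → ℂ)]
    rw [h1, h2]
  have hMA : M' = MA A := by
    apply le_antisymm
    · intro x hx
      refine ⟨φ ⟨x, hx⟩, ?_⟩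
      show Matrix.mulVecLin _ (iota n (φ ⟨x, hx⟩)) = x
      rw [S_apply, ← key (φ ⟨x, hx⟩)]
      have : φe.symm (φ ⟨x, hx⟩) = ⟨x, hx⟩ := φe.symm_apply_apply ⟨x, hx⟩
      rw [show φ ⟨x, hx⟩ = φe ⟨x, hx⟩ from rfl, φe.symm_apply_apply]
    · rintro _ ⟨y, rfl⟩
      show Matrix.mulVecLin _ (iota n y) ∈ M'
      rw [S_apply, ← key y]
      exact (φe.symm y).2
  -- invertibility
  have hunit : IsUnit (A.map (Complex.ofReal) + Complex.I • (1 : Matrix (Fin n) (Fin n) ℂ)) := by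
    set S := A.map (Complex.ofReal) + Complex.I • (1 : Matrix (Fin n) (Fin n) ℂ) with hS
    rw [← Matrix.mulVec_injective_iff_isUnit]
    have : Function.Injective S.mulVecLin := by
      rw [← LinearMap.ker_eq_bot, LinearMap.ker_eq_bot']
      intro z hz
      set u := ReL n z with hu
      set v := ImL n z with hv
      have hzd : z = iota n u + Complex.I • iota n v := decomp z
      have hz' : (iota n (A *ᵥ u) - iota n v)
          + Complex.I • (iota n u + iota n (A *ᵥ v)) = 0 := by
        rw [← hz]
        show _ = S.mulVecLin z
        rw [hzd, map_add, LinearMap.map_smul, S_apply, S_apply]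
        simp only [smul_add, smul_smul, Complex.I_mul_I, neg_one_smul]
        module
      have hre : A *ᵥ u - v = 0 := by
        have := congrArg (ReL n) hz'
        simpa [map_add, map_sub, ReL_iota, ReL_I_iota] using this
      have him : u + A *ᵥ v = 0 := by
        have := congrArg (ImL n) hz'
        simpa [map_add, map_sub, ImL_iota, ImL_I_iota] using this
      have hveq : v = A *ᵥ u := (sub_eq_zero.mp hre).symm
      have hueq : A *ᵥ (A *ᵥ u) = -u := by
        rw [← hveq]; exact eq_neg_of_add_eq_zero_right him
      set w := iota n (A *ᵥ u) + Complex.I • iota n u with hw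
      have hwM : w ∈ MA A := ⟨u, by show Matrix.mulVecLin _ (iota n u) = w; rw [S_apply]⟩
      have hIwM : Complex.I • w ∈ MA A := by
        refine ⟨A *ᵥ u, ?_⟩
        show Matrix.mulVecLin _ (iota n (A *ᵥ u)) = Complex.I • w
        rw [S_apply, hueq, hw]
        simp only [map_neg, smul_add, smul_smul, Complex.I_mul_I, neg_one_smul]
        module
      have hIwJ : Complex.I • w ∈ (MA A).map (Jmap n) := ⟨w, hwM, rfl⟩
      have hmem : Complex.I • w ∈ MA A ⊓ (MA A).map (Jmap n) := ⟨hIwM, hIwJ⟩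
      rw [← hMA, hM'tr, Submodule.mem_bot] at hmem
      have hw0 : w = 0 := by
        have := congrArg (fun z => Complex.I⁻¹ • z) hmem
        simpa [smul_smul, Complex.I_ne_zero] using this
      have hu0 : u = 0 := by
        have := congrArg (ImL n) hw0
        simpa [hw, map_add, ImL_iota, ImL_I_iota] using this
      have hv0 : v = 0 := by rw [hveq, hu0, Matrix.mulVec_zero]
      rw [hzd, hu0, hv0]
      simp
    intro z1 z2 h12
    exact this (show S.mulVecLin z1 = S.mulVecLin z2 by simpa [Matrix.mulVecLin_apply] using h12)
  exact ⟨T, A, hunit, hTN, hMA⟩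
end

section
/- Let a ∈ ℝ, d ∈ ℝ, and let M ⊂ ℝ⁴ be the real span of (a, 1, 0, 0) and (d, 0, a, 1). Then the squared Euclidean distance from (x, y, u, v) to M equals (u - av)²/(1 + a²) + ((1 + a²)(x - ay) - dau - dv)²/((1 + a²)((1 + a²)² + d²)). -/
theorem stmt_16 (a d x y u v : ℝ)
    (M : Submodule ℝ (EuclideanSpace ℝ (Fin 4)))
    (hM : M = Submodule.span ℝ
      {(WithLp.equiv 2 (Fin 4 → ℝ)).symm ![a, 1, 0, 0],
       (WithLp.equiv 2 (Fin 4 → ℝ)).symm ![d, 0, a, 1]}) :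
    Metric.infDist ((WithLp.equiv 2 (Fin 4 → ℝ)).symm ![x, y, u, v]) (M : Set (EuclideanSpace ℝ (Fin 4))) ^ 2 =
      (u - a * v) ^ 2 / (1 + a ^ 2) +
        ((1 + a ^ 2) * (x - a * y) - d * a * u - d * v) ^ 2 /
          ((1 + a ^ 2) * ((1 + a ^ 2) ^ 2 + d ^ 2)) := by
  have ha : (0:ℝ) < 1 + a ^ 2 := by positivity
  have hD : (0:ℝ) < (1 + a ^ 2) ^ 2 + d ^ 2 := by positivity
  set v1 : EuclideanSpace ℝ (Fin 4) := (WithLp.equiv 2 (Fin 4 → ℝ)).symm ![a, 1, 0, 0]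
  set v2 : EuclideanSpace ℝ (Fin 4) := (WithLp.equiv 2 (Fin 4 → ℝ)).symm ![d, 0, a, 1]
  set p : EuclideanSpace ℝ (Fin 4) := (WithLp.equiv 2 (Fin 4 → ℝ)).symm ![x, y, u, v]
  set D : ℝ := (1 + a ^ 2) ^ 2 + d ^ 2 with hDdef
  set α : ℝ := ((a*x + y) * (1 + a^2 + d^2) - a*d*(d*x + a*u + v)) / D with hα
  set β : ℝ := ((1 + a^2) * (d*x + a*u + v) - a*d*(a*x + y)) / D with hβ
  set m : EuclideanSpace ℝ (Fin 4) := α • v1 + β • v2 with hm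
  have hmM : m ∈ M := by
    rw [hM]
    exact Submodule.mem_span_pair.2 ⟨α, β, rfl⟩
  have hinner1 : (inner ℝ (p - m) v1 : ℝ) = 0 := by
    simp only [PiLp.inner_apply, RCLike.inner_apply, starRingEnd_apply, Fin.sum_univ_four,
      hm, PiLp.sub_apply, PiLp.add_apply, PiLp.smul_apply, smul_eq_mul, v1, v2, p,
      WithLp.equiv_symm_apply, PiLp.toLp_apply, Matrix.cons_val_zero, Matrix.cons_val_one, Matrix.head_cons,
      Matrix.cons_val_two, Matrix.tail_cons, Matrix.cons_val_three, star_trivial]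
    rw [hα, hβ, hDdef]
    field_simp
    ring
  have hinner2 : (inner ℝ (p - m) v2 : ℝ) = 0 := by
    simp only [PiLp.inner_apply, RCLike.inner_apply, starRingEnd_apply, Fin.sum_univ_four,
      hm, PiLp.sub_apply, PiLp.add_apply, PiLp.smul_apply, smul_eq_mul, v1, v2, p,
      WithLp.equiv_symm_apply, PiLp.toLp_apply, Matrix.cons_val_zero, Matrix.cons_val_one, Matrix.head_cons,
      Matrix.cons_val_two, Matrix.tail_cons, Matrix.cons_val_three, star_trivial]
    rw [hα, hβ, hDdef]
    field_simp
    ring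
  have hproj : (M.starProjection p : EuclideanSpace ℝ (Fin 4)) = m := by
    refine Submodule.eq_starProjection_of_mem_of_inner_eq_zero hmM ?_
    intro w hw
    rw [hM] at hw
    obtain ⟨c, e, rfl⟩ := Submodule.mem_span_pair.1 hw
    rw [inner_add_right, inner_smul_right, inner_smul_right, hinner1, hinner2]
    simp
  have hdist : Metric.infDist p (M : Set (EuclideanSpace ℝ (Fin 4))) = ‖p - m‖ := by
    rw [Metric.infDist_eq_iInf, ← hproj, Submodule.starProjection_minimal]
    simp_rw [dist_eq_norm]; rfl
  rw [hdist, ← real_inner_self_eq_norm_sq]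
  simp only [PiLp.inner_apply, RCLike.inner_apply, starRingEnd_apply, Fin.sum_univ_four,
    hm, PiLp.sub_apply, PiLp.add_apply, PiLp.smul_apply, smul_eq_mul, v1, v2, p,
    WithLp.equiv_symm_apply, PiLp.toLp_apply, Matrix.cons_val_zero, Matrix.cons_val_one, Matrix.head_cons,
    Matrix.cons_val_two, Matrix.tail_cons, Matrix.cons_val_three, star_trivial]
  rw [hα, hβ, hDdef]
  field_simp
  ring
end

section
/- Let V = y² + v², Z = x² + u², ω = V + Z, Δ = xv - yu, and let Q(x, y, u, v) = (1/2)(x² + y² + u² + v²)·[(5VZ + ω²)(2VZ + ω²) - 12Δ²(ω² - VZ)]. Then Q(x, y, u, v) ≥ (63/176)(x² + y² + u² + v²)⁵ for all real x, y, u, v. -/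
theorem stmt_19 (x y u v V Z ω Δ Q : ℝ)
    (hV : V = y ^ 2 + v ^ 2) (hZ : Z = x ^ 2 + u ^ 2)
    (hω : ω = V + Z) (hΔ : Δ = x * v - y * u)
    (hQ : Q = 1 / 2 * (x ^ 2 + y ^ 2 + u ^ 2 + v ^ 2) *
      ((5 * V * Z + ω ^ 2) * (2 * V * Z + ω ^ 2) - 12 * Δ ^ 2 * (ω ^ 2 - V * Z))) :
    Q ≥ 63 / 176 * (x ^ 2 + y ^ 2 + u ^ 2 + v ^ 2) ^ 5 := by
  have hw : ω = x ^ 2 + y ^ 2 + u ^ 2 + v ^ 2 := by rw [hω, hV, hZ]; ring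
  have hw0 : (0:ℝ) ≤ ω := by rw [hw]; positivity
  have key : (5 * V * Z + ω ^ 2) * (2 * V * Z + ω ^ 2) - 12 * Δ ^ 2 * (ω ^ 2 - V * Z)
      - 63 / 88 * ω ^ 4
      = 22 * (V * Z - 5 / 44 * ω ^ 2) ^ 2 + 12 * (x * y + u * v) ^ 2 * (V ^ 2 + V * Z + Z ^ 2) := by
    subst hV hZ hω hΔ; ring
  have hpos : (0:ℝ) ≤ 22 * (V * Z - 5 / 44 * ω ^ 2) ^ 2 + 12 * (x * y + u * v) ^ 2 * (V ^ 2 + V * Z + Z ^ 2) := by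
    have : (0:ℝ) ≤ V ^ 2 + V * Z + Z ^ 2 := by subst hV hZ; positivity
    positivity
  have hE : 63 / 88 * ω ^ 4 ≤ (5 * V * Z + ω ^ 2) * (2 * V * Z + ω ^ 2) - 12 * Δ ^ 2 * (ω ^ 2 - V * Z) := by
    linarith
  have h2 := mul_le_mul_of_nonneg_left hE hw0
  rw [hQ, ← hw]
  nlinarith [h2]
end
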